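/- Let R be a right artinian ring such that every finitely generated indecomposable right R-module is automorphism-invariant (i.e. R is of RAI-type). Let e ∈ R be an indecomposable idempotent such that eR is not uniform, and let A be a right ideal of R contained in Soc(eR). Then Soc(eR) = A ⊕ A′ where A′ has no simple submodule isomorphic to a simple submodule of A, and the right R-module eR/A′ is quasi-projective. -/

import Mathlib

universe u v w

section Defs

variable (A : Type u) [Ring A]

/-- `N` is an essential submodule of `M`: it meets every nonzero submodule nontrivially. -/
def IsEssentialIn {M : Type v} [AddCommGroup M] [Module A M] (N : Submodule A M) : Prop :=
  ∀ K : Submodule A M, K ≠ ⊥ → N ⊓ K ≠ ⊥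

/-- `i : M →ₗ[A] E` realizes `E` as an injective hull of `M`: `E` is injective and the image
of `M` is an essential submodule of `E`. -/
def IsInjHull (M : Type v) [AddCommGroup M] [Module A M]
    (E : Type v) [AddCommGroup E] [Module A E] (i : M →ₗ[A] E) : Prop :=
  Function.Injective i ∧ Module.Injective A E ∧ IsEssentialIn A (LinearMap.range i)

/-- `M` is automorphism-invariant: for any injective hull `E` of `M`, the image of `M` is
invariant under every automorphism of `E`. -/
def IsAutInv (M : Type v) [AddCommGroup M] [Module A M] : Prop :=
  ∀ (E : Type v) [AddCommGroup E] [Module A E] (i : M →ₗ[A] E),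
    IsInjHull A M E i →
      ∀ σ : E ≃ₗ[A] E, (LinearMap.range i).map (σ : E →ₗ[A] E) ≤ LinearMap.range i

/-- `M` is quasi-injective: every homomorphism from a submodule of `M` into `M` extends to an
endomorphism of `M`. -/
def IsQuasiInj (M : Type v) [AddCommGroup M] [Module A M] : Prop :=
  ∀ (N : Submodule A M) (f : ↥N →ₗ[A] M), ∃ g : M →ₗ[A] M, ∀ n : ↥N, g ↑n = f n

/-- `M` is pseudo-injective: every monomorphism from a submodule of `M` into `M` extends to an
endomorphism of `M`. -/
def IsPseudoInj (M : Type v) [AddCommGroup M] [Module A M] : Prop :=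
  ∀ (N : Submodule A M) (f : ↥N →ₗ[A] M), Function.Injective f →
    ∃ g : M →ₗ[A] M, ∀ n : ↥N, g ↑n = f n

/-- `M` is quasi-projective: every homomorphism `M → M/N` lifts to an endomorphism of `M`. -/
def IsQuasiProj (M : Type v) [AddCommGroup M] [Module A M] : Prop :=
  ∀ (N : Submodule A M) (f : M →ₗ[A] M ⧸ N), ∃ g : M →ₗ[A] M, N.mkQ.comp g = f

/-- `M` is an indecomposable module: nonzero and not an (internal) direct sum of two nonzero
submodules. -/
def IsIndecomposableMod (M : Type v) [AddCommGroup M] [Module A M] : Prop :=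
  Nontrivial M ∧ ∀ N₁ N₂ : Submodule A M, IsCompl N₁ N₂ → N₁ = ⊥ ∨ N₂ = ⊥

/-- `M` is a uniform module: nonzero, and any two nonzero submodules intersect nontrivially. -/
def IsUniformMod (M : Type v) [AddCommGroup M] [Module A M] : Prop :=
  Nontrivial M ∧ ∀ N₁ N₂ : Submodule A M, N₁ ≠ ⊥ → N₂ ≠ ⊥ → N₁ ⊓ N₂ ≠ ⊥

/-- `M` is uniserial: its submodules are linearly ordered by inclusion. -/
def IsUniserialMod (M : Type v) [AddCommGroup M] [Module A M] : Prop :=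
  ∀ N₁ N₂ : Submodule A M, N₁ ≤ N₂ ∨ N₂ ≤ N₁

/-- `M` is a local module: it has a unique maximal submodule containing every proper submodule. -/
def IsLocalMod (M : Type v) [AddCommGroup M] [Module A M] : Prop :=
  ∃ N : Submodule A M, N ≠ ⊤ ∧ ∀ K : Submodule A M, K ≠ ⊤ → K ≤ N

/-- The socle of `M`: the sum of all simple submodules. -/
def SocleOf (M : Type v) [AddCommGroup M] [Module A M] : Submodule A M :=
  sSup {S : Submodule A M | IsSimpleModule A ↥S}

/-- The socle of a submodule `N` of `M`, as a submodule of `M`: the sum of all simple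
submodules of `M` contained in `N`. -/
def SocleIn {M : Type v} [AddCommGroup M] [Module A M] (N : Submodule A M) : Submodule A M :=
  sSup {S : Submodule A M | S ≤ N ∧ IsSimpleModule A ↥S}

/-- `M` is a singular module: every element is annihilated by an essential (right) ideal. -/
def IsSingularMod (M : Type v) [AddCommGroup M] [Module A M] : Prop :=
  ∀ m : M, IsEssentialIn A (LinearMap.ker (LinearMap.toSpanSingleton A M m))

/-- `M` is a cyclic module. -/
def IsCyclicMod (M : Type v) [AddCommGroup M] [Module A M] : Prop :=
  ∃ m : M, Submodule.span A {m} = ⊤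

end Defs

section RingDefs

variable (R : Type u) [Ring R]

/-- `R` is of right automorphism-invariant type: every finitely generated indecomposable
right `R`-module (i.e. left `Rᵐᵒᵖ`-module) is automorphism-invariant. -/
def IsRAIType : Prop :=
  ∀ (M : Type u) [AddCommGroup M] [Module Rᵐᵒᵖ M], Module.Finite Rᵐᵒᵖ M →
    IsIndecomposableMod Rᵐᵒᵖ M → IsAutInv Rᵐᵒᵖ M

/-- `R` is an indecomposable ring: it is nonzero and is not the direct sum of two nonzero
two-sided ideals. -/
def IsIndecRing : Prop :=
  Nontrivial R ∧ ¬ ∃ I J : Ideal R, (∀ x ∈ I, ∀ r : R, x * r ∈ I) ∧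
    (∀ x ∈ J, ∀ r : R, x * r ∈ J) ∧ I ≠ ⊥ ∧ J ≠ ⊥ ∧ IsCompl I J

/-- The right ideal `xR` of `R`. -/
def RtIdeal (x : R) : Submodule Rᵐᵒᵖ R := Submodule.span Rᵐᵒᵖ ({x} : Set R)

/-- The right ideal `xJ(R)` of `R`, where `J(R)` is the Jacobson radical. -/
def RtIdealJ (x : R) : Submodule Rᵐᵒᵖ R :=
  Submodule.span Rᵐᵒᵖ ((fun j => x * j) '' ((Ideal.jacobson (⊥ : Ideal R) : Ideal R) : Set R))

/-- The module `xR / xJ(R)`. -/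
abbrev TopQuot (x : R) :=
  ↥(RtIdeal R x) ⧸ Submodule.comap (RtIdeal R x).subtype (RtIdealJ R x)

end RingDefs


namespace Stmt8Aux

variable {A : Type u} [Ring A]

section ess
variable {M : Type v} [AddCommGroup M] [Module A M]

/-- `N` is essential in `H` (as submodules of `M`). -/
def EssPair (N H : Submodule A M) : Prop :=
  N ≤ H ∧ ∀ L : Submodule A M, L ≤ H → L ≠ ⊥ → N ⊓ L ≠ ⊥

lemma essPair_refl (N : Submodule A M) : EssPair N N :=
  ⟨le_rfl, fun L hL hne => by rwa [inf_eq_right.2 hL]⟩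

lemma EssPair.trans {N H H' : Submodule A M} (h1 : EssPair N H) (h2 : EssPair H H') :
    EssPair N H' := by
  refine ⟨h1.1.trans h2.1, fun L hL hne => ?_⟩
  have hHL : H ⊓ L ≠ ⊥ := h2.2 L hL hne
  have := h1.2 (H ⊓ L) inf_le_left hHL
  intro hc
  apply this
  rw [← inf_assoc, inf_eq_left.2 h1.1, hc]

lemma inf_ne_bot_of_mem {N K : Submodule A M} {x : M} (hx : x ≠ 0) (hN : x ∈ N) (hK : x ∈ K) :
    N ⊓ K ≠ ⊥ :=
  (Submodule.ne_bot_iff _).2 ⟨x, ⟨hN, hK⟩, hx⟩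

lemma span_le_of_mem {N : Submodule A M} {x : M} (hx : x ∈ N) : Submodule.span A {x} ≤ N := by
  rw [Submodule.span_le, Set.singleton_subset_iff]; exact hx

/-- Zorn: maximal essential extension of `N` inside `M`. -/
lemma exists_maximal_essPair (N : Submodule A M) :
    ∃ H : Submodule A M, EssPair N H ∧ ∀ H', EssPair N H' → H ≤ H' → H' = H := by
  have hch : ∀ c ⊆ {H : Submodule A M | EssPair N H},
      IsChain (fun x1 x2 => x1 ≤ x2) c → ∀ y ∈ c,
      ∃ ub ∈ {H : Submodule A M | EssPair N H}, ∀ z ∈ c, z ≤ ub := by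
    intro c hc hchain y hy
    refine ⟨sSup c, ⟨le_trans (hc hy).1 (le_sSup hy), fun L hL hne => ?_⟩, fun z hz => le_sSup hz⟩
    obtain ⟨x, hxL, hx0⟩ := (Submodule.ne_bot_iff _).1 hne
    obtain ⟨H', hH'c, hxH'⟩ := (Submodule.mem_sSup_of_directed ⟨y, hy⟩ hchain.directedOn).1 (hL hxL)
    have := (hc hH'c).2 (Submodule.span A {x}) (span_le_of_mem hxH')
      (by rw [Ne, Submodule.span_singleton_eq_bot]; exact hx0)
    intro hcon
    exact this (eq_bot_iff.2 (le_trans (inf_le_inf_left N (span_le_of_mem hxL)) hcon.le))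
  obtain ⟨H, -, hmax⟩ := zorn_le_nonempty₀ _ hch N (essPair_refl N)
  exact ⟨H, hmax.1, fun H' hH' hle => le_antisymm (hmax.2 hH' hle) hle⟩

/-- Zorn: maximal submodule disjoint from `H`. -/
lemma exists_maximal_disjoint (H : Submodule A M) :
    ∃ C : Submodule A M, H ⊓ C = ⊥ ∧ ∀ C', H ⊓ C' = ⊥ → C ≤ C' → C' = C := by
  have hch : ∀ c ⊆ {C : Submodule A M | H ⊓ C = ⊥},
      IsChain (fun x1 x2 => x1 ≤ x2) c → ∀ y ∈ c,
      ∃ ub ∈ {C : Submodule A M | H ⊓ C = ⊥}, ∀ z ∈ c, z ≤ ub := by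
    intro c hc hchain y hy
    refine ⟨sSup c, ?_, fun z hz => le_sSup hz⟩
    rw [Set.mem_setOf_eq, eq_bot_iff]
    rintro x ⟨hxH, hxs⟩
    obtain ⟨C', hC'c, hxC'⟩ := (Submodule.mem_sSup_of_directed ⟨y, hy⟩ hchain.directedOn).1 hxs
    have : x ∈ H ⊓ C' := ⟨hxH, hxC'⟩
    rwa [hc hC'c] at this
  obtain ⟨C, -, hmax⟩ := zorn_le_nonempty₀ _ hch ⊥ (by simp)
  exact ⟨C, hmax.1, fun C' hC' hle => le_antisymm (hmax.2 hC' hle) hle⟩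

/-- If `C` is a maximal complement of `H`, then `H ⊔ C` is essential in `M`. -/
lemma sup_compl_essential {H C : Submodule A M} (hdisj : H ⊓ C = ⊥)
    (hmax : ∀ C', H ⊓ C' = ⊥ → C ≤ C' → C' = C) :
    ∀ K : Submodule A M, K ≠ ⊥ → (H ⊔ C) ⊓ K ≠ ⊥ := by
  intro K hK hcon
  have h1 : H ⊓ (C ⊔ K) = ⊥ := by
    rw [eq_bot_iff]
    rintro x ⟨hxH, hxCK⟩
    obtain ⟨cc, hcc, k, hk, rfl⟩ := Submodule.mem_sup.1 hxCK
    have hkmem : k ∈ (H ⊔ C) ⊓ K := by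
      refine ⟨?_, hk⟩
      have : k = cc + k - cc := (add_sub_cancel_left cc k).symm
      rw [this]
      exact Submodule.sub_mem _ (Submodule.mem_sup_left hxH) (Submodule.mem_sup_right hcc)
    rw [hcon] at hkmem
    simp only [Submodule.mem_bot] at hkmem
    subst hkmem
    have : cc ∈ H ⊓ C := ⟨by simpa using hxH, hcc⟩
    rw [hdisj] at this
    simpa using this
  have h2 : C ⊔ K = C := hmax _ h1 le_sup_left
  apply hK
  rw [eq_bot_iff]
  intro x hx
  have hxC : x ∈ C := h2 ▸ Submodule.mem_sup_right hx
  have : x ∈ (H ⊔ C) ⊓ K := ⟨Submodule.mem_sup_right hxC, hx⟩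
  rw [hcon] at this
  exact this

/-- A maximal complement is a closed submodule. -/
lemma compl_closed {H C : Submodule A M} (hdisj : H ⊓ C = ⊥)
    (hmax : ∀ C', H ⊓ C' = ⊥ → C ≤ C' → C' = C) :
    ∀ C', EssPair C C' → C' = C := by
  intro C' hE
  refine hmax C' ?_ hE.1
  rw [eq_bot_iff]
  by_contra hne
  have : H ⊓ C' ≠ ⊥ := fun hb => hne (hb ▸ le_rfl)
  obtain ⟨x, ⟨hxH, hxC'⟩, hx0⟩ := (Submodule.ne_bot_iff _).1 this
  have := hE.2 _ (span_le_of_mem hxC') (by rw [Ne, Submodule.span_singleton_eq_bot]; exact hx0)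
  obtain ⟨y, ⟨hyC, hyspan⟩, hy0⟩ := (Submodule.ne_bot_iff _).1 this
  have hyH : y ∈ H := span_le_of_mem hxH hyspan
  have : y ∈ H ⊓ C := ⟨hyH, hyC⟩
  rw [hdisj] at this
  exact hy0 this

lemma map_mkQ_self_eq_bot (C : Submodule A M) : C.map C.mkQ = ⊥ := by
  rw [eq_bot_iff]
  rintro x ⟨c, hc, rfl⟩
  simpa using (Submodule.Quotient.mk_eq_zero C).2 hc

/-- Essentiality passes to the quotient by a closed submodule. -/
lemma quotient_essential {X C : Submodule A M}
    (hX : ∀ K : Submodule A M, K ≠ ⊥ → X ⊓ K ≠ ⊥)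
    (hC : ∀ C', EssPair C C' → C' = C) :
    ∀ K' : Submodule A (M ⧸ C), K' ≠ ⊥ → (X.map C.mkQ) ⊓ K' ≠ ⊥ := by
  intro K' hK'
  set K := K'.comap C.mkQ with hKdef
  have hCK : C ≤ K := by
    intro x hx
    have h0 : C.mkQ x = 0 := (Submodule.Quotient.mk_eq_zero C).2 hx
    simp only [hKdef, Submodule.mem_comap, h0]
    exact K'.zero_mem
  have hKC : K ≠ C := by
    intro hcon
    apply hK'
    have hmap := congrArg (Submodule.map C.mkQ) hcon
    rwa [Submodule.map_comap_eq, LinearMap.range_eq_top.2 C.mkQ_surjective, top_inf_eq,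
      map_mkQ_self_eq_bot] at hmap
  -- C is not essential in K, so there is L ≤ K, L ≠ ⊥, C ⊓ L = ⊥
  have hnotess : ¬ EssPair C K := fun h => hKC (hC K h)
  have hex : ∃ L : Submodule A M, L ≤ K ∧ L ≠ ⊥ ∧ C ⊓ L = ⊥ := by
    by_contra hno
    push_neg at hno
    exact hnotess ⟨hCK, fun L hL hne => hno L hL hne⟩
  obtain ⟨L, hLK, hLne, hCL⟩ := hex
  obtain ⟨x, ⟨hxX, hxL⟩, hx0⟩ := (Submodule.ne_bot_iff _).1 (hX L hLne)
  have hxnotC : x ∉ C := fun hxC => hx0 (by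
    have : x ∈ C ⊓ L := ⟨hxC, hxL⟩
    rwa [hCL, Submodule.mem_bot] at this)
  refine inf_ne_bot_of_mem (x := C.mkQ x) ?_ ⟨x, hxX, rfl⟩ (hLK hxL)
  intro h0
  exact hxnotC ((Submodule.Quotient.mk_eq_zero C).1 h0)

end ess

section inj
variable {M : Type v} [AddCommGroup M] [Module A M]

/-- A retract of an injective module is injective. -/
lemma injective_of_retract {N : Type v} [AddCommGroup N] [Module A N] [h : Module.Injective A M]
    (i : N →ₗ[A] M) (r : M →ₗ[A] N) (hri : ∀ n, r (i n) = n) : Module.Injective A N where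
  out X Y _ _ _ _ f hf g := by
    obtain ⟨h', hh'⟩ := h.out f hf (i.comp g)
    exact ⟨r.comp h', fun x => by simp [hh' x, hri]⟩

lemma injective_of_equiv {N : Type v} [AddCommGroup N] [Module A N] [Module.Injective A M]
    (e : M ≃ₗ[A] N) : Module.Injective A N :=
  injective_of_retract (e.symm : N →ₗ[A] M) (e : M →ₗ[A] N) (fun n => e.apply_symm_apply n)

/-- A closed submodule of an injective module is the image of an idempotent endomorphism. -/
lemma closed_summand [Module.Injective A M] (H : Submodule A M)
    (hcl : ∀ H', EssPair H H' → H' = H) :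
    ∃ f : M →ₗ[A] M, (∀ x ∈ H, f x = x) ∧ LinearMap.range f = H := by
  obtain ⟨C, hdisj, hmax⟩ := exists_maximal_disjoint H
  -- the two pieces inside ↥(H ⊔ C)
  set W := H ⊔ C with hW
  set H' : Submodule A ↥W := H.comap W.subtype with hH'
  set C' : Submodule A ↥W := C.comap W.subtype with hC'
  have hcompl : IsCompl H' C' := by
    constructor
    · rw [disjoint_iff, eq_bot_iff]
      rintro x ⟨hx1, hx2⟩
      have : (x : M) ∈ H ⊓ C := ⟨hx1, hx2⟩
      rw [hdisj, Submodule.mem_bot] at this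
      simpa [Submodule.mem_bot] using Subtype.ext this
    · rw [codisjoint_iff, eq_top_iff]
      rintro ⟨x, hx⟩ -
      obtain ⟨h, hh, cc, hcc, rfl⟩ := Submodule.mem_sup.1 hx
      have : (⟨h + cc, hx⟩ : ↥W) = ⟨h, Submodule.mem_sup_left hh⟩ + ⟨cc, Submodule.mem_sup_right hcc⟩ := by
        ext; rfl
      rw [this]
      exact Submodule.add_mem _ (Submodule.mem_sup_left (by exact hh))
        (Submodule.mem_sup_right (by exact hcc))
  set proj := Submodule.projectionOnto H' C' hcompl with hproj
  set π₀ : ↥W →ₗ[A] M := (W.subtype.comp H'.subtype).comp proj with hπ₀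
  obtain ⟨f, hf⟩ := Module.Injective.out W.subtype (Submodule.injective_subtype W) π₀
  have hfH : ∀ x ∈ H, f x = x := by
    intro x hx
    have hxW : x ∈ W := Submodule.mem_sup_left hx
    have h1 : f x = π₀ ⟨x, hxW⟩ := hf ⟨x, hxW⟩
    rw [h1]
    have h2 : (⟨x, hxW⟩ : ↥W) = ((⟨⟨x, hxW⟩, hx⟩ : ↥H') : ↥W) := rfl
    simp only [hπ₀, LinearMap.comp_apply]
    rw [hproj, Submodule.projectionOnto_apply_of_mem_left hcompl (x := ⟨x, hxW⟩) (by exact hx)]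
    rfl
  have hfC : ∀ x ∈ C, f x = 0 := by
    intro x hx
    have hxW : x ∈ W := Submodule.mem_sup_right hx
    have h1 : f x = π₀ ⟨x, hxW⟩ := hf ⟨x, hxW⟩
    rw [h1]
    simp only [hπ₀, LinearMap.comp_apply]
    rw [hproj, (Submodule.projectionOnto_apply_eq_zero_iff hcompl (x := ⟨x, hxW⟩)).2 (by exact hx)]
    simp
  have hkerC : LinearMap.ker f = C := by
    have h1 : C ≤ LinearMap.ker f := fun x hx => LinearMap.mem_ker.2 (hfC x hx)
    have h2 : H ⊓ LinearMap.ker f = ⊥ := by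
      rw [eq_bot_iff]
      rintro x ⟨hxH, hxk⟩
      have : f x = x := hfH x hxH
      rw [LinearMap.mem_ker.1 hxk] at this
      simp [← this]
    exact hmax _ h2 h1
  have hrange : LinearMap.range f = H := by
    have hHle : H ≤ LinearMap.range f := fun x hx => ⟨x, hfH x hx⟩
    -- essentiality of H in range f
    refine hcl _ ⟨hHle, fun K hK hne => ?_⟩
    set fbar := C.liftQ f (hkerC ▸ le_rfl) with hfbar
    have hfbar_inj : Function.Injective fbar := by
      rw [← LinearMap.ker_eq_bot]
      exact Submodule.ker_liftQ_eq_bot _ _ _ (hkerC ▸ le_rfl)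
    have hfbar_mk : ∀ x : M, fbar (C.mkQ x) = f x := fun x => rfl
    have hrangebar : LinearMap.range fbar = LinearMap.range f := Submodule.range_liftQ _ _ _
    set Kbar := K.comap fbar with hKbar
    have hKbar_ne : Kbar ≠ ⊥ := by
      intro hcon
      apply hne
      have : Submodule.map fbar Kbar = K := by
        rw [hKbar, Submodule.map_comap_eq, hrangebar, inf_eq_right.2 hK]
      rw [← this, hcon, Submodule.map_bot]
    -- (H ⊔ C)/C = map mkQ H is essential in M/C
    have hess := quotient_essential (X := W) (C := C)
      (sup_compl_essential hdisj hmax) (compl_closed hdisj hmax) Kbar hKbar_ne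
    have hmapW : W.map C.mkQ = H.map C.mkQ := by
      rw [hW, Submodule.map_sup, map_mkQ_self_eq_bot, sup_bot_eq]
    rw [hmapW] at hess
    obtain ⟨z, ⟨hz1, hz2⟩, hz0⟩ := (Submodule.ne_bot_iff _).1 hess
    obtain ⟨h, hh, rfl⟩ := hz1
    refine inf_ne_bot_of_mem (x := h) ?_ hh ?_
    · intro hcon
      apply hz0
      rw [hcon]
      simp
    · have : fbar (C.mkQ h) ∈ K := hz2
      rwa [hfbar_mk, hfH h hh] at this
  exact ⟨f, hfH, hrange⟩

end inj

section hull
open CategoryTheory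

variable {A : Type u} [Ring A]

/-- Every module embeds in an injective module (same universe). -/
lemma exists_injective_embedding (M : Type u) [AddCommGroup M] [Module A M] :
    ∃ (Q : Type u) (_ : AddCommGroup Q) (_ : Module A Q) (j : M →ₗ[A] Q),
      Module.Injective A Q ∧ Function.Injective j := by
  letI : EnoughInjectives (ModuleCat.{u} A) := ModuleCat.enoughInjectives.{u, u} A
  set X : ModuleCat.{u} A := ModuleCat.of A M with hX
  set Q : ModuleCat.{u} A := Injective.under X with hQ
  have hQinj : CategoryTheory.Injective Q := Injective.injective_under X
  refine ⟨Q, inferInstance, inferInstance, ((Injective.ι X).hom : X →ₗ[A] Q), ?_, ?_⟩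
  · exact Module.injective_module_of_injective_object A Q (inj := hQinj)
  · exact (ModuleCat.mono_iff_injective (Injective.ι X)).1 inferInstance

/-- Existence of an injective hull. -/
lemma exists_injHull (M : Type u) [AddCommGroup M] [Module A M] :
    ∃ (E : Type u) (_ : AddCommGroup E) (_ : Module A E) (i : M →ₗ[A] E),
      IsInjHull A M E i := by
  obtain ⟨Q, _, _, j, hQinj, hj⟩ := exists_injective_embedding (A := A) M
  obtain ⟨H, hess, hmaxH⟩ := exists_maximal_essPair (LinearMap.range j)
  have hcl : ∀ H', EssPair H H' → H' = H := fun H' hH' => hmaxH H' (hess.trans hH') hH'.1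
  obtain ⟨f, hfH, hrange⟩ := closed_summand H hcl
  -- retraction onto H gives injectivity of ↥H
  have hmemf : ∀ x : Q, f x ∈ H := fun x => hrange ▸ LinearMap.mem_range_self f x
  haveI : Module.Injective A ↥H :=
    injective_of_retract H.subtype (f.codRestrict H hmemf)
      (fun n => Subtype.ext (hfH n.1 n.2))
  have hmemj : ∀ m : M, j m ∈ H := fun m => hess.1 ⟨m, rfl⟩
  refine ⟨↥H, inferInstance, inferInstance, j.codRestrict H hmemj, ?_, inferInstance, ?_⟩
  · intro a b hab
    exact hj (congrArg Subtype.val hab)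
  · -- essential range
    intro K hK
    have hmapne : Submodule.map H.subtype K ≠ ⊥ := by
      obtain ⟨k, hk, hk0⟩ := (Submodule.ne_bot_iff _).1 hK
      refine (Submodule.ne_bot_iff _).2 ⟨k.1, ⟨k, hk, rfl⟩, fun h => hk0 (Subtype.ext h)⟩
    have := hess.2 (Submodule.map H.subtype K) (Submodule.map_subtype_le H K) hmapne
    obtain ⟨x, ⟨hxN, hxK⟩, hx0⟩ := (Submodule.ne_bot_iff _).1 this
    obtain ⟨m, rfl⟩ := hxN
    obtain ⟨k, hk, hkval⟩ := hxK
    have hxH : j m ∈ H := hmemj m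
    refine inf_ne_bot_of_mem (x := (⟨j m, hxH⟩ : ↥H)) ?_ ⟨m, rfl⟩ ?_
    · intro h
      exact hx0 (congrArg Subtype.val h)
    · have : k = ⟨j m, hxH⟩ := Subtype.ext hkval
      rwa [this] at hk

end hull

section decomp

variable {A : Type u} [Ring A]

lemma ne_bot_of_mem_ne_zero {M : Type v} [AddCommGroup M] [Module A M]
    {N : Submodule A M} {x : M} (hx : x ∈ N) (h0 : x ≠ 0) : N ≠ ⊥ :=
  (Submodule.ne_bot_iff _).2 ⟨x, hx, h0⟩

/-- If an automorphism-invariant module contains two disjoint isomorphic nonzero submodules,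
then it decomposes as a nontrivial direct sum. -/
lemma decomp_of_autInv {M : Type u} [AddCommGroup M] [Module A M]
    (hAI : IsAutInv A M) (X Y : Submodule A M) (hX : X ≠ ⊥) (hY : Y ≠ ⊥)
    (hXY : X ⊓ Y = ⊥) (iso : ↥X ≃ₗ[A] ↥Y) :
    ∃ N₁ N₂ : Submodule A M, IsCompl N₁ N₂ ∧ N₁ ≠ ⊥ ∧ N₂ ≠ ⊥ := by
  classical
  obtain ⟨E, _, _, i, hull⟩ := exists_injHull (A := A) M
  obtain ⟨hi, hEinj, hEss⟩ := hull
  have hi0 : ∀ x : M, i x = 0 → x = 0 := fun x hx => hi (by simpa using hx)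
  set S1 : Submodule A E := X.map i with hS1def
  set S2 : Submodule A E := Y.map i with hS2def
  have hS12 : S1 ⊓ S2 = ⊥ := by
    rw [hS1def, hS2def, ← Submodule.map_inf i hi, hXY, Submodule.map_bot]
  -- E₁: maximal essential extension of S1 in E
  obtain ⟨E₁, hessS1, hmax₁⟩ := exists_maximal_essPair S1
  have hcl₁ : ∀ H', EssPair E₁ H' → H' = E₁ := fun H' h => hmax₁ H' (hessS1.trans h) h.1
  obtain ⟨f₁, hf₁id, hf₁range⟩ := closed_summand E₁ hcl₁
  have hf₁mem : ∀ x : E, f₁ x ∈ E₁ := fun x => hf₁range ▸ LinearMap.mem_range_self f₁ x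
  have hf₁idem : ∀ x : E, f₁ (f₁ x) = f₁ x := fun x => hf₁id _ (hf₁mem x)
  set C₁ : Submodule A E := LinearMap.ker f₁ with hC₁def
  have hsubmem : ∀ x : E, x - f₁ x ∈ C₁ := by
    intro x
    rw [hC₁def, LinearMap.mem_ker, map_sub, hf₁idem, sub_self]
  set ρ : E →ₗ[A] ↥C₁ := (LinearMap.id - f₁).codRestrict C₁ hsubmem with hρdef
  have hρval : ∀ x : E, (ρ x : E) = x - f₁ x := fun x => rfl
  have hρC₁ : ∀ z : ↥C₁, ρ (z : E) = z := by
    intro z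
    refine Subtype.ext ?_
    rw [hρval]
    have : f₁ (z : E) = 0 := z.2
    rw [this, sub_zero]
  haveI hC₁inj : Module.Injective A ↥C₁ := injective_of_retract C₁.subtype ρ hρC₁
  have hS2E1 : S2 ⊓ E₁ = ⊥ := by
    by_contra hne
    have := hessS1.2 (S2 ⊓ E₁) inf_le_right hne
    obtain ⟨x, ⟨hx1, hx2, _⟩, hx0⟩ := (Submodule.ne_bot_iff _).1 this
    exact hx0 (by have : x ∈ S1 ⊓ S2 := ⟨hx1, hx2⟩; rwa [hS12, Submodule.mem_bot] at this)
  set ψ₂ : ↥S2 →ₗ[A] ↥C₁ := ρ.comp S2.subtype with hψ₂def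
  have hψ₂inj : Function.Injective ψ₂ := by
    intro s t hst
    have h1 : (s : E) - f₁ (s : E) = (t : E) - f₁ (t : E) := congrArg Subtype.val hst
    have h2 : (s : E) - (t : E) = f₁ ((s : E) - (t : E)) := by
      rw [map_sub]; linear_combination (norm := abel) h1
    have hmem : (s : E) - (t : E) ∈ S2 ⊓ E₁ :=
      ⟨Submodule.sub_mem _ s.2 t.2, h2 ▸ hf₁mem ((s : E) - (t : E))⟩
    rw [hS2E1, Submodule.mem_bot, sub_eq_zero] at hmem
    exact Subtype.ext hmem
  set T₂ : Submodule A ↥C₁ := LinearMap.range ψ₂ with hT₂def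
  -- H₂ : maximal essential extension of T₂ inside ↥C₁
  obtain ⟨H₂, hessT2, hmax₂⟩ := exists_maximal_essPair T₂
  have hcl₂ : ∀ H', EssPair H₂ H' → H' = H₂ := fun H' h => hmax₂ H' (hessT2.trans h) h.1
  obtain ⟨f₂, hf₂id, hf₂range⟩ := closed_summand H₂ hcl₂
  have hf₂mem : ∀ x : ↥C₁, f₂ x ∈ H₂ := fun x => hf₂range ▸ LinearMap.mem_range_self f₂ x
  set incl₂ : ↥H₂ →ₗ[A] E := C₁.subtype.comp H₂.subtype with hincl₂def
  set r₂ : E →ₗ[A] ↥H₂ := (f₂.comp ρ).codRestrict H₂ (fun x => hf₂mem (ρ x)) with hr₂def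
  have hr₂val : ∀ x : E, ((r₂ x : ↥C₁) : E) = ((f₂ (ρ x) : ↥C₁) : E) := fun x => rfl
  have hretr : ∀ z : ↥H₂, r₂ (incl₂ z) = z := by
    intro z
    refine Subtype.ext ?_
    have h1 : ρ (incl₂ z) = (z : ↥C₁) := hρC₁ (z : ↥C₁)
    show f₂ (ρ (incl₂ z)) = (z : ↥C₁)
    rw [h1]
    exact hf₂id _ z.2
  haveI hH₂inj : Module.Injective A ↥H₂ := injective_of_retract incl₂ r₂ hretr
  -- the isomorphism v₀ from S1 to a submodule of H₂
  have hT₂H₂ : T₂ ≤ H₂ := hessT2.1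
  set e₁ : ↥S1 ≃ₗ[A] ↥X := (Submodule.equivMapOfInjective i hi X).symm with he₁def
  set e₂ : ↥Y ≃ₗ[A] ↥S2 := Submodule.equivMapOfInjective i hi Y with he₂def
  set e₃ : ↥S2 ≃ₗ[A] ↥T₂ := LinearEquiv.ofInjective ψ₂ hψ₂inj with he₃def
  set chain : ↥S1 ≃ₗ[A] ↥T₂ := ((e₁.trans iso).trans e₂).trans e₃ with hchaindef
  set v₀ : ↥S1 →ₗ[A] ↥H₂ := (Submodule.inclusion hT₂H₂).comp (chain : ↥S1 →ₗ[A] ↥T₂) with hv₀def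
  have hv₀inj : Function.Injective v₀ := by
    intro s t hst
    exact chain.injective (Submodule.inclusion_injective hT₂H₂ hst)
  have hS1E₁ : S1 ≤ E₁ := hessS1.1
  obtain ⟨u, hu⟩ := Module.Injective.out (Submodule.inclusion hS1E₁)
    (Submodule.inclusion_injective hS1E₁) v₀
  have huinj : Function.Injective u := by
    rw [← LinearMap.ker_eq_bot]
    by_contra hne
    have hmapne : Submodule.map E₁.subtype (LinearMap.ker u) ≠ ⊥ := by
      obtain ⟨z, hz, hz0⟩ := (Submodule.ne_bot_iff _).1 hne
      exact ne_bot_of_mem_ne_zero ⟨z, hz, rfl⟩ (fun h => hz0 (Subtype.ext h))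
    have := hessS1.2 _ (Submodule.map_subtype_le E₁ _) hmapne
    obtain ⟨x, ⟨hxS1, hxK⟩, hx0⟩ := (Submodule.ne_bot_iff _).1 this
    obtain ⟨z, hzker, hzval⟩ := hxK
    have hxE₁ : x ∈ E₁ := hS1E₁ hxS1
    have hz' : z = ⟨x, hxE₁⟩ := Subtype.ext hzval
    have h1 : u ⟨x, hxE₁⟩ = 0 := by rw [← hz']; exact hzker
    have h2 : u ⟨x, hxE₁⟩ = v₀ ⟨x, hxS1⟩ := hu ⟨x, hxS1⟩
    have h3 : v₀ ⟨x, hxS1⟩ = 0 := by rw [← h2, h1]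
    have h4 : (⟨x, hxS1⟩ : ↥S1) = 0 := hv₀inj (by rw [h3]; simp)
    exact hx0 (congrArg Subtype.val h4)
  -- surjectivity of u
  haveI hE₁inj : Module.Injective A ↥E₁ :=
    injective_of_retract E₁.subtype (f₁.codRestrict E₁ hf₁mem)
      (fun n => Subtype.ext (hf₁id n.1 n.2))
  set Wu : Submodule A ↥H₂ := LinearMap.range u with hWudef
  haveI hWuinj : Module.Injective A ↥Wu :=
    injective_of_equiv (LinearEquiv.ofInjective u huinj)
  obtain ⟨ρ₃, hρ₃⟩ := hWuinj.out (X := ↥Wu) (Y := ↥H₂) Wu.subtype (Submodule.injective_subtype Wu)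
    (LinearMap.id : ↥Wu →ₗ[A] ↥Wu)
  set θ : ↥H₂ →ₗ[A] ↥H₂ := Wu.subtype.comp ρ₃ with hθdef
  have hθWu : ∀ w : ↥H₂, w ∈ Wu → θ w = w := by
    intro w hw
    have := hρ₃ ⟨w, hw⟩
    simpa [hθdef] using congrArg (Wu.subtype) this
  have hθmem : ∀ w : ↥H₂, θ w ∈ Wu := fun w => (ρ₃ w).2
  set T₂' : Submodule A ↥H₂ := T₂.comap H₂.subtype with hT₂'def
  have hT₂'Wu : T₂' ≤ Wu := by
    rintro z hz
    obtain ⟨s, hs⟩ := hz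
    set x : ↥S1 := chain.symm (e₃ s) with hxdef
    have hval : (v₀ x : ↥C₁) = ψ₂ s := by
      have h5 : chain x = e₃ s := by rw [hxdef, LinearEquiv.apply_symm_apply]
      have h6 : (v₀ x : ↥H₂) = Submodule.inclusion hT₂H₂ (chain x) := rfl
      rw [h6, h5]
      rfl
    have h7 : v₀ x ∈ Wu := by
      rw [hWudef]
      exact ⟨Submodule.inclusion hS1E₁ x, hu x⟩
    have h8 : v₀ x = z := by
      refine Subtype.ext ?_
      rw [hval, hs]
      rfl
    rwa [h8] at h7
  have hT₂'ess : ∀ L : Submodule A ↥H₂, L ≠ ⊥ → T₂' ⊓ L ≠ ⊥ := by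
    intro L hL
    have hmapne : Submodule.map H₂.subtype L ≠ ⊥ := by
      obtain ⟨z, hz, hz0⟩ := (Submodule.ne_bot_iff _).1 hL
      exact ne_bot_of_mem_ne_zero ⟨z, hz, rfl⟩ (fun h => hz0 (Subtype.ext h))
    have := hessT2.2 _ (Submodule.map_subtype_le H₂ _) hmapne
    obtain ⟨t, ⟨htT2, htL⟩, ht0⟩ := (Submodule.ne_bot_iff _).1 this
    obtain ⟨l, hl, hlval⟩ := htL
    have htH₂ : t ∈ H₂ := hT₂H₂ htT2
    have : l = ⟨t, htH₂⟩ := Subtype.ext hlval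
    refine inf_ne_bot_of_mem (x := (⟨t, htH₂⟩ : ↥H₂)) ?_ htT2 (by rwa [← this])
    intro h
    exact ht0 (congrArg Subtype.val h)
  have hθid : ∀ w : ↥H₂, θ w = w := by
    have hkerθ : LinearMap.ker θ = ⊥ := by
      by_contra hne
      have := hT₂'ess _ hne
      obtain ⟨w, ⟨hwT, hwker⟩, hw0⟩ := (Submodule.ne_bot_iff _).1 this
      have : θ w = w := hθWu w (hT₂'Wu hwT)
      rw [LinearMap.mem_ker.1 hwker] at this
      exact hw0 this.symm
    intro w
    have h1 : θ (θ w) = θ w := hθWu _ (hθmem w)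
    have : θ (θ w - w) = 0 := by rw [map_sub, h1, sub_self]
    have h2 : θ w - w ∈ LinearMap.ker θ := LinearMap.mem_ker.2 this
    rw [hkerθ, Submodule.mem_bot, sub_eq_zero] at h2
    exact h2
  have husurj : Function.Surjective u := by
    rw [← LinearMap.range_eq_top]
    rw [eq_top_iff]
    rintro w -
    have := hθid w
    rw [← this]
    exact hθmem w
  set uE : ↥E₁ ≃ₗ[A] ↥H₂ := LinearEquiv.ofBijective u ⟨huinj, husurj⟩ with huEdef
  set c₁ : E →ₗ[A] ↥E₁ := f₁.codRestrict E₁ hf₁mem with hc₁def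
  -- τ and σ
  set τ : E →ₗ[A] E := incl₂.comp ((uE : ↥E₁ →ₗ[A] ↥H₂).comp c₁) with hτdef
  have hτC₁ : ∀ x : E, τ x ∈ C₁ := fun x => (uE (c₁ x)).1.2
  have hττ : ∀ x : E, τ (τ x) = 0 := by
    intro x
    have h1 : f₁ (τ x) = 0 := hτC₁ x
    have h2 : c₁ (τ x) = 0 := Subtype.ext h1
    show incl₂ (uE (c₁ (τ x))) = 0
    rw [h2, map_zero, map_zero]
  have hcomp1 : ((LinearMap.id + τ).comp (LinearMap.id - τ) : E →ₗ[A] E) = LinearMap.id := by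
    ext x
    simp only [LinearMap.comp_apply, LinearMap.add_apply, LinearMap.sub_apply, LinearMap.id_apply,
      map_sub, hττ]
    abel
  have hcomp2 : ((LinearMap.id - τ).comp (LinearMap.id + τ) : E →ₗ[A] E) = LinearMap.id := by
    ext x
    simp only [LinearMap.comp_apply, LinearMap.add_apply, LinearMap.sub_apply, LinearMap.id_apply,
      map_add, hττ]
    abel
  set σ : E ≃ₗ[A] E := LinearEquiv.ofLinear (LinearMap.id + τ) (LinearMap.id - τ) hcomp1 hcomp2
    with hσdef
  have hInvτ : ∀ m ∈ LinearMap.range i, τ m ∈ LinearMap.range i := by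
    intro m hm
    have h1 := hAI E i ⟨hi, hEinj, hEss⟩ σ
    have h2 : σ m ∈ LinearMap.range i := h1 ⟨m, hm, rfl⟩
    have h3 : σ m = m + τ m := rfl
    have : τ m = σ m - m := by rw [h3]; abel
    rw [this]
    exact Submodule.sub_mem _ h2 hm
  -- τ' and σ'
  set τ' : E →ₗ[A] E := E₁.subtype.comp ((uE.symm : ↥H₂ →ₗ[A] ↥E₁).comp r₂) with hτ'def
  have hτ'E₁ : ∀ x : E, τ' x ∈ E₁ := fun x => (uE.symm (r₂ x)).2
  have hr₂E₁ : ∀ x : E, x ∈ E₁ → r₂ x = 0 := by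
    intro x hx
    refine Subtype.ext ?_
    show f₂ (ρ x) = 0
    have h1 : ρ x = 0 := by
      refine Subtype.ext ?_
      rw [hρval, hf₁id x hx, sub_self]
      rfl
    rw [h1, map_zero]
  have hτ'τ' : ∀ x : E, τ' (τ' x) = 0 := by
    intro x
    show E₁.subtype (uE.symm (r₂ (τ' x))) = 0
    rw [hr₂E₁ _ (hτ'E₁ x), map_zero, map_zero]
  have hcomp1' : ((LinearMap.id + τ').comp (LinearMap.id - τ') : E →ₗ[A] E) = LinearMap.id := by
    ext x
    simp only [LinearMap.comp_apply, LinearMap.add_apply, LinearMap.sub_apply, LinearMap.id_apply,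
      map_sub, hτ'τ']
    abel
  have hcomp2' : ((LinearMap.id - τ').comp (LinearMap.id + τ') : E →ₗ[A] E) = LinearMap.id := by
    ext x
    simp only [LinearMap.comp_apply, LinearMap.add_apply, LinearMap.sub_apply, LinearMap.id_apply,
      map_add, hτ'τ']
    abel
  set σ' : E ≃ₗ[A] E := LinearEquiv.ofLinear (LinearMap.id + τ') (LinearMap.id - τ') hcomp1' hcomp2'
    with hσ'def
  have hInvτ' : ∀ m ∈ LinearMap.range i, τ' m ∈ LinearMap.range i := by
    intro m hm
    have h1 := hAI E i ⟨hi, hEinj, hEss⟩ σ'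
    have h2 : σ' m ∈ LinearMap.range i := h1 ⟨m, hm, rfl⟩
    have h3 : σ' m = m + τ' m := rfl
    have : τ' m = σ' m - m := by rw [h3]; abel
    rw [this]
    exact Submodule.sub_mem _ h2 hm
  -- the key invariance: f₁ maps range i into itself
  have hkey : ∀ m ∈ LinearMap.range i, f₁ m ∈ LinearMap.range i := by
    intro m hm
    have h1 : τ m ∈ LinearMap.range i := hInvτ m hm
    have h2 : τ' (τ m) ∈ LinearMap.range i := hInvτ' _ h1
    have h3 : τ' (τ m) = f₁ m := by
      have h4 : r₂ (τ m) = uE (c₁ m) := by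
        show r₂ (incl₂ (uE (c₁ m))) = uE (c₁ m)
        exact hretr _
      show E₁.subtype (uE.symm (r₂ (τ m))) = f₁ m
      rw [h4, LinearEquiv.symm_apply_apply]
      rfl
    rwa [h3] at h2
  -- conclude: decomposition of M
  refine ⟨E₁.comap i, C₁.comap i, ?_, ?_, ?_⟩
  · constructor
    · rw [disjoint_iff, eq_bot_iff]
      rintro x ⟨hx1, hx2⟩
      have h1 : f₁ (i x) = i x := hf₁id _ hx1
      have h2 : f₁ (i x) = 0 := hx2
      have : i x = 0 := by rw [← h1, h2]
      simpa [Submodule.mem_bot] using hi0 x this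
    · rw [codisjoint_iff, eq_top_iff]
      rintro x -
      obtain ⟨y, hy⟩ := hkey (i x) ⟨x, rfl⟩
      have hyN₁ : y ∈ E₁.comap i := by
        simp only [Submodule.mem_comap]
        rw [hy]
        exact hf₁mem (i x)
      have hxyN₂ : x - y ∈ C₁.comap i := by
        simp only [Submodule.mem_comap, map_sub]
        rw [hC₁def, LinearMap.mem_ker, map_sub, hy, hf₁idem, sub_self]
      have : x = y + (x - y) := by abel
      rw [this]
      exact Submodule.add_mem _ (Submodule.mem_sup_left hyN₁) (Submodule.mem_sup_right hxyN₂)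
  · obtain ⟨x, hx, hx0⟩ := (Submodule.ne_bot_iff _).1 hX
    refine ne_bot_of_mem_ne_zero (x := x) ?_ hx0
    simp only [Submodule.mem_comap]
    exact hS1E₁ ⟨x, hx, rfl⟩
  · have hC₁ne : C₁ ≠ ⊥ := by
      obtain ⟨y, hy, hy0⟩ := (Submodule.ne_bot_iff _).1 hY
      have h1 : ψ₂ ⟨i y, ⟨y, hy, rfl⟩⟩ ≠ 0 := by
        intro h
        have := hψ₂inj (a₁ := ⟨i y, ⟨y, hy, rfl⟩⟩) (a₂ := 0) (by rw [h, map_zero])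
        have h2 : i y = 0 := congrArg Subtype.val this
        exact hy0 (hi0 y h2)
      refine ne_bot_of_mem_ne_zero (x := (ψ₂ ⟨i y, ⟨y, hy, rfl⟩⟩ : E)) (ψ₂ _).2 ?_
      intro h
      exact h1 (Subtype.ext h)
    have := hEss C₁ hC₁ne
    obtain ⟨z, ⟨hz1, hz2⟩, hz0⟩ := (Submodule.ne_bot_iff _).1 this
    obtain ⟨x, rfl⟩ := hz1
    refine ne_bot_of_mem_ne_zero (x := x) hz2 ?_
    intro h
    apply hz0
    rw [h, map_zero]

end decomp


section semis

variable {A : Type u} [Ring A]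

lemma isSemisimple_of_isSimple {M : Type v} [AddCommGroup M] [Module A M]
    [IsSimpleModule A M] : IsSemisimpleModule A M := by
  constructor

/-- Zorn: maximal submodule of `T` disjoint from `H`. -/
lemma exists_maximal_disjoint_le {M : Type v} [AddCommGroup M] [Module A M]
    (H T : Submodule A M) :
    ∃ C : Submodule A M, C ≤ T ∧ H ⊓ C = ⊥ ∧
      ∀ C', C' ≤ T → H ⊓ C' = ⊥ → C ≤ C' → C' = C := by
  have hch : ∀ c ⊆ {C : Submodule A M | C ≤ T ∧ H ⊓ C = ⊥},
      IsChain (fun x1 x2 => x1 ≤ x2) c → ∀ y ∈ c,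
      ∃ ub ∈ {C : Submodule A M | C ≤ T ∧ H ⊓ C = ⊥}, ∀ z ∈ c, z ≤ ub := by
    intro c hc hchain y hy
    refine ⟨sSup c, ⟨sSup_le (fun z hz => (hc hz).1), ?_⟩, fun z hz => le_sSup hz⟩
    rw [eq_bot_iff]
    rintro x ⟨hxH, hxs⟩
    obtain ⟨C', hC'c, hxC'⟩ := (Submodule.mem_sSup_of_directed ⟨y, hy⟩ hchain.directedOn).1 hxs
    have : x ∈ H ⊓ C' := ⟨hxH, hxC'⟩
    rwa [(hc hC'c).2] at this
  obtain ⟨C, -, hmax⟩ := zorn_le_nonempty₀ _ hch ⊥ (by simp)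
  exact ⟨C, hmax.1.1, hmax.1.2,
    fun C' h1 h2 hle => le_antisymm (hmax.2 ⟨h1, h2⟩ hle) hle⟩

/-- The image of a simple submodule under an endomorphism of `eR` stays inside the
"orthogonal" part `B` of the socle. -/
lemma simple_image_le {M : Type v} [AddCommGroup M] [Module A M]
    {eR Soc Asub B : Submodule A M} (hAB : Asub ⊓ B = ⊥) (hABsup : Asub ⊔ B = Soc)
    (hSocEr : Soc ≤ eR)
    (hSocMax : ∀ V : Submodule A M, V ≤ eR → IsSimpleModule A ↥V → V ≤ Soc)
    (hstar : ∀ S T : Submodule A M, S ≤ B → T ≤ Asub → IsSimpleModule A ↥S →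
      IsSimpleModule A ↥T → (↥S ≃ₗ[A] ↥T) → False)
    (Φ : ↥eR →ₗ[A] M) (hΦ : ∀ x, Φ x ∈ eR)
    (S' : Submodule A M) (hS'B : S' ≤ B) (hS' : IsSimpleModule A ↥S') :
    Submodule.map Φ (S'.comap eR.subtype) ≤ B := by
  classical
  have hBSoc : B ≤ Soc := hABsup ▸ le_sup_right
  have hS'eR : S' ≤ eR := (hS'B.trans hBSoc).trans hSocEr
  set ψ : ↥(S'.comap eR.subtype) →ₗ[A] M := Φ.comp (S'.comap eR.subtype).subtype with hψdef
  have hmapeq : Submodule.map Φ (S'.comap eR.subtype) = LinearMap.range ψ := by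
    rw [hψdef, LinearMap.range_comp, Submodule.range_subtype]
  rw [hmapeq]
  haveI hD : IsSimpleModule A ↥(S'.comap eR.subtype) :=
    IsSimpleModule.congr (Submodule.comapSubtypeEquivOfLe hS'eR)
  rcases eq_bot_or_eq_top (LinearMap.ker ψ) with hker | hker
  · -- ψ injective
    have hψinj : Function.Injective ψ := LinearMap.ker_eq_bot.1 hker
    have hVeR : LinearMap.range ψ ≤ eR := by
      rintro x ⟨d, rfl⟩
      exact hΦ _
    haveI hV : IsSimpleModule A ↥(LinearMap.range ψ) :=
      IsSimpleModule.congr (LinearEquiv.ofInjective ψ hψinj).symm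
    have hVSoc : LinearMap.range ψ ≤ Soc := hSocMax _ hVeR hV
    -- complementary pair inside ↥Soc
    set Ac : Submodule A ↥Soc := Asub.comap Soc.subtype with hAcdef
    set Bc : Submodule A ↥Soc := B.comap Soc.subtype with hBcdef
    have hc : IsCompl Ac Bc := by
      constructor
      · rw [disjoint_iff, eq_bot_iff]
        rintro z ⟨hz1, hz2⟩
        have : (z : M) ∈ Asub ⊓ B := ⟨hz1, hz2⟩
        rw [hAB, Submodule.mem_bot] at this
        simpa [Submodule.mem_bot] using Subtype.ext this
      · rw [codisjoint_iff, eq_top_iff]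
        rintro ⟨z, hz⟩ -
        have hz2 : z ∈ Asub ⊔ B := by rw [hABsup]; exact hz
        obtain ⟨a, ha, b, hb, hab⟩ := Submodule.mem_sup.1 hz2
        have haS : a ∈ Soc := hABsup ▸ Submodule.mem_sup_left ha
        have hbS : b ∈ Soc := hABsup ▸ Submodule.mem_sup_right hb
        have : (⟨z, hz⟩ : ↥Soc) = ⟨a, haS⟩ + ⟨b, hbS⟩ := by ext; exact hab.symm
        rw [this]
        exact Submodule.add_mem _ (Submodule.mem_sup_left (by exact ha))
          (Submodule.mem_sup_right (by exact hb))
    set ψS : ↥(S'.comap eR.subtype) →ₗ[A] ↥Soc :=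
      ψ.codRestrict Soc (fun d => hVSoc (LinearMap.mem_range_self ψ d)) with hψSdef
    set χ := (Submodule.projectionOnto Ac Bc hc).comp ψS with hχdef
    rcases eq_bot_or_eq_top (LinearMap.ker χ) with hkerχ | hkerχ
    · -- χ injective: build a simple submodule of Asub isomorphic to S' — contradiction
      exfalso
      have hχinj : Function.Injective χ := LinearMap.ker_eq_bot.1 hkerχ
      set ω : ↥(S'.comap eR.subtype) →ₗ[A] M := (Soc.subtype.comp Ac.subtype).comp χ with hωdef
      have hωinj : Function.Injective ω := by
        intro a b hab
        exact hχinj (Subtype.ext (Subtype.ext hab))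
      have hWA : LinearMap.range ω ≤ Asub := by
        rintro x ⟨d, rfl⟩
        exact (χ d).2
      haveI hW : IsSimpleModule A ↥(LinearMap.range ω) :=
        IsSimpleModule.congr (LinearEquiv.ofInjective ω hωinj).symm
      refine hstar S' (LinearMap.range ω) hS'B hWA hS' hW ?_
      exact ((Submodule.comapSubtypeEquivOfLe hS'eR).symm.trans
        (LinearEquiv.ofInjective ω hωinj))
    · -- χ = 0 : the image lands in B
      have hχ0 : χ = 0 := LinearMap.ker_eq_top.1 hkerχ
      rintro x ⟨d, rfl⟩
      have h1 : χ d = 0 := by rw [hχ0]; rfl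
      have h2 : ψS d ∈ Bc := by
        rw [hχdef] at h1
        exact (Submodule.projectionOnto_apply_eq_zero_iff hc).1 h1
      exact h2
  · -- ψ = 0
    have : ψ = 0 := LinearMap.ker_eq_top.1 hker
    rw [this]
    rintro x ⟨d, rfl⟩
    exact B.zero_mem

end semis

section ringlemmas

variable {R : Type u} [Ring R]

/-- The canonical right-module linear equivalence `Rᵐᵒᵖ ≃ R`. -/
def unopEquiv (R : Type u) [Ring R] : Rᵐᵒᵖ ≃ₗ[Rᵐᵒᵖ] R where
  toFun := MulOpposite.unop
  invFun := MulOpposite.op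
  map_add' := fun a b => rfl
  map_smul' := fun a b => rfl
  left_inv := fun a => rfl
  right_inv := fun a => rfl

lemma mem_rtIdeal {e x : R} : x ∈ RtIdeal R e ↔ ∃ a : R, e * a = x := by
  rw [RtIdeal, Submodule.mem_span_singleton]
  constructor
  · rintro ⟨a, rfl⟩
    exact ⟨a.unop, rfl⟩
  · rintro ⟨a, rfl⟩
    exact ⟨MulOpposite.op a, rfl⟩

lemma projective_rtIdeal (e : R) (he : IsIdempotentElem e) :
    Module.Projective Rᵐᵒᵖ ↥(RtIdeal R e) := by
  haveI : Module.Projective Rᵐᵒᵖ R := Module.Projective.of_equiv (unopEquiv R)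
  set s : R →ₗ[Rᵐᵒᵖ] ↥(RtIdeal R e) :=
    { toFun := fun x => ⟨e * x, mem_rtIdeal.2 ⟨x, rfl⟩⟩
      map_add' := fun x y => Subtype.ext (by simp [mul_add])
      map_smul' := fun a x => Subtype.ext (by
        show e * (x * a.unop) = (e * x) * a.unop
        rw [mul_assoc]) } with hsdef
  refine Module.Projective.of_split (RtIdeal R e).subtype s ?_
  ext x
  obtain ⟨a, ha⟩ := mem_rtIdeal.1 x.2
  show e * (x : R) = (x : R)
  rw [← ha, ← mul_assoc, he]

end ringlemmas

end Stmt8Aux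



theorem stmt_8 (R : Type u) [Ring R] [IsArtinian Rᵐᵒᵖ R] (hRAI : IsRAIType R)
    (e : R) (he : IsIdempotentElem e)
    (heInd : IsIndecomposableMod Rᵐᵒᵖ ↥(RtIdeal R e))
    (heNotUnif : ¬ IsUniformMod Rᵐᵒᵖ ↥(RtIdeal R e))
    (A : Submodule Rᵐᵒᵖ R) (hA : A ≤ SocleIn Rᵐᵒᵖ (RtIdeal R e)) :
    ∃ A' : Submodule Rᵐᵒᵖ R,
      Disjoint A A' ∧ A ⊔ A' = SocleIn Rᵐᵒᵖ (RtIdeal R e) ∧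
      (∀ S T : Submodule Rᵐᵒᵖ R, S ≤ A' → T ≤ A → IsSimpleModule Rᵐᵒᵖ ↥S →
        IsSimpleModule Rᵐᵒᵖ ↥T → ¬ Nonempty (↥S ≃ₗ[Rᵐᵒᵖ] ↥T)) ∧
      IsQuasiProj Rᵐᵒᵖ (↥(RtIdeal R e) ⧸ Submodule.comap (RtIdeal R e).subtype A') := by
  classical
  have hMfin : Module.Finite Rᵐᵒᵖ ↥(RtIdeal R e) :=
    Module.Finite.iff_fg.2 (Submodule.fg_span_singleton e)
  have hAI : IsAutInv Rᵐᵒᵖ ↥(RtIdeal R e) := hRAI _ hMfin heInd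
  -- "square-freeness": no two disjoint isomorphic nonzero submodules of eR
  have star : ∀ S T : Submodule Rᵐᵒᵖ R, S ≤ RtIdeal R e → T ≤ RtIdeal R e → S ⊓ T = ⊥ →
      S ≠ ⊥ → T ≠ ⊥ → (↥S ≃ₗ[Rᵐᵒᵖ] ↥T) → False := by
    intro S T hS hT hST hSne hTne isoST
    have hX : S.comap (RtIdeal R e).subtype ≠ ⊥ := by
      obtain ⟨s, hs, h0⟩ := (Submodule.ne_bot_iff _).1 hSne
      exact Stmt8Aux.ne_bot_of_mem_ne_zero (x := (⟨s, hS hs⟩ : ↥(RtIdeal R e)))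
        (by exact hs) (fun hh => h0 (congrArg Subtype.val hh))
    have hY : T.comap (RtIdeal R e).subtype ≠ ⊥ := by
      obtain ⟨t, ht, h0⟩ := (Submodule.ne_bot_iff _).1 hTne
      exact Stmt8Aux.ne_bot_of_mem_ne_zero (x := (⟨t, hT ht⟩ : ↥(RtIdeal R e)))
        (by exact ht) (fun hh => h0 (congrArg Subtype.val hh))
    have hXY : S.comap (RtIdeal R e).subtype ⊓ T.comap (RtIdeal R e).subtype = ⊥ := by
      rw [← Submodule.comap_inf, hST, Submodule.comap_bot, Submodule.ker_subtype]
    have isoXY := (Submodule.comapSubtypeEquivOfLe hS).trans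
      (isoST.trans (Submodule.comapSubtypeEquivOfLe hT).symm)
    obtain ⟨N₁, N₂, hc, h1, h2⟩ := Stmt8Aux.decomp_of_autInv hAI _ _ hX hY hXY isoXY
    rcases heInd.2 N₁ N₂ hc with h | h
    · exact h1 h
    · exact h2 h
  have hSocle : SocleIn Rᵐᵒᵖ (RtIdeal R e) ≤ RtIdeal R e := sSup_le (fun S hS => hS.1)
  obtain ⟨B, hBle, hABdisj, hBmax⟩ :=
    Stmt8Aux.exists_maximal_disjoint_le A (SocleIn Rᵐᵒᵖ (RtIdeal R e))
  have hsup : A ⊔ B = SocleIn Rᵐᵒᵖ (RtIdeal R e) := by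
    refine le_antisymm (sup_le hA hBle) (sSup_le ?_)
    rintro S ⟨hSle, hSsimple⟩
    have hSsoc : S ≤ SocleIn Rᵐᵒᵖ (RtIdeal R e) := le_sSup ⟨hSle, hSsimple⟩
    have hatom : IsAtom S := isSimpleModule_iff_isAtom.1 hSsimple
    by_cases hcase : S ⊓ (A ⊔ B) = S
    · exact inf_eq_left.1 hcase
    · have hbot : S ⊓ (A ⊔ B) = ⊥ := hatom.2 _ (lt_of_le_of_ne inf_le_left hcase)
      have hdisj' : A ⊓ (B ⊔ S) = ⊥ := by
        rw [eq_bot_iff]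
        rintro x ⟨hxA, hxBS⟩
        obtain ⟨b, hb, sv, hs, rfl⟩ := Submodule.mem_sup.1 hxBS
        have hsmem : sv ∈ S ⊓ (A ⊔ B) := by
          refine ⟨hs, ?_⟩
          have hsv : sv = (b + sv) - b := (add_sub_cancel_left b sv).symm
          rw [hsv]
          exact Submodule.sub_mem _ (Submodule.mem_sup_left hxA) (Submodule.mem_sup_right hb)
        rw [hbot, Submodule.mem_bot] at hsmem
        subst hsmem
        have : b + 0 ∈ A ⊓ B := ⟨by simpa using hxA, by simpa using hb⟩
        rw [hABdisj] at this
        simpa using this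
      have hBS : B ⊔ S = B := hBmax _ (sup_le hBle hSsoc) hdisj' le_sup_left
      have hSB : S ≤ B := le_trans le_sup_right hBS.le
      exact (hatom.1 (by rwa [inf_eq_left.2 (hSB.trans le_sup_right)] at hbot)).elim
  have horth : ∀ S T : Submodule Rᵐᵒᵖ R, S ≤ B → T ≤ A → IsSimpleModule Rᵐᵒᵖ ↥S →
      IsSimpleModule Rᵐᵒᵖ ↥T → ¬ Nonempty (↥S ≃ₗ[Rᵐᵒᵖ] ↥T) := by
    rintro S T hSB hTA hS hT ⟨isoST⟩
    refine star S T ((hSB.trans hBle).trans hSocle) ((hTA.trans hA).trans hSocle) ?_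
      (isSimpleModule_iff_isAtom.1 hS).1 (isSimpleModule_iff_isAtom.1 hT).1 isoST
    have hBA : B ⊓ A = ⊥ := by rw [inf_comm]; exact hABdisj
    rw [eq_bot_iff]
    exact le_trans (inf_le_inf hSB hTA) hBA.le
  -- semisimplicity of the socle
  haveI hSS : IsSemisimpleModule Rᵐᵒᵖ ↥(SocleIn Rᵐᵒᵖ (RtIdeal R e)) := by
    refine isSemisimpleModule_of_isSemisimpleModule_submodule
      (ι := ↥{S : Submodule Rᵐᵒᵖ R | S ≤ RtIdeal R e ∧ IsSimpleModule Rᵐᵒᵖ ↥S})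
      (s := Set.univ)
      (p := fun S => (S : Submodule Rᵐᵒᵖ R).comap (SocleIn Rᵐᵒᵖ (RtIdeal R e)).subtype) ?_ ?_
    · rintro ⟨S, hS⟩ -
      haveI : IsSimpleModule Rᵐᵒᵖ ↥S := hS.2
      haveI : IsSemisimpleModule Rᵐᵒᵖ ↥S := Stmt8Aux.isSemisimple_of_isSimple
      exact IsSemisimpleModule.congr (Submodule.comapSubtypeEquivOfLe (le_sSup hS))
    · apply Submodule.map_injective_of_injective
        (Submodule.injective_subtype (SocleIn Rᵐᵒᵖ (RtIdeal R e)))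
      rw [iSup_univ, Submodule.map_iSup, Submodule.map_subtype_top]
      have hstep : ∀ S : ↥{S : Submodule Rᵐᵒᵖ R | S ≤ RtIdeal R e ∧ IsSimpleModule Rᵐᵒᵖ ↥S},
          Submodule.map (SocleIn Rᵐᵒᵖ (RtIdeal R e)).subtype
            ((S : Submodule Rᵐᵒᵖ R).comap (SocleIn Rᵐᵒᵖ (RtIdeal R e)).subtype)
            = (S : Submodule Rᵐᵒᵖ R) := by
        intro S
        rw [Submodule.map_comap_subtype, inf_eq_right.2 (show (S : Submodule Rᵐᵒᵖ R) ≤ SocleIn Rᵐᵒᵖ (RtIdeal R e) from le_sSup S.2)]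
      rw [iSup_congr hstep, ← sSup_eq_iSup']
      rfl
  -- full invariance of B under endomorphisms of eR
  have hFI : ∀ (h : ↥(RtIdeal R e) →ₗ[Rᵐᵒᵖ] ↥(RtIdeal R e)) (x : ↥(RtIdeal R e)),
      (x : R) ∈ B → ((h x : ↥(RtIdeal R e)) : R) ∈ B := by
    intro h x hx
    have hBer : B ≤ RtIdeal R e := hBle.trans hSocle
    set Φ := (RtIdeal R e).subtype.comp h with hΦdef
    have hΦmem : ∀ y, Φ y ∈ RtIdeal R e := fun y => (h y).2
    have hkey : Submodule.map Φ (B.comap (RtIdeal R e).subtype) ≤ B := by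
      set 𝒯 := {m : Submodule Rᵐᵒᵖ ↥(SocleIn Rᵐᵒᵖ (RtIdeal R e)) |
        IsSimpleModule Rᵐᵒᵖ ↥m ∧ m ≤ B.comap (SocleIn Rᵐᵒᵖ (RtIdeal R e)).subtype} with h𝒯
      have hBc : sSup 𝒯 = B.comap (SocleIn Rᵐᵒᵖ (RtIdeal R e)).subtype :=
        IsSemisimpleModule.sSup_simples_le _
      have hGle : ∀ m : ↥𝒯,
          Submodule.map (SocleIn Rᵐᵒᵖ (RtIdeal R e)).subtype (m : Submodule Rᵐᵒᵖ _) ≤ B := by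
        rintro ⟨m, hm⟩ x ⟨z, hz, rfl⟩
        exact hm.2 hz
      have hBeq : B.comap (RtIdeal R e).subtype =
          ⨆ m : ↥𝒯, (Submodule.map (SocleIn Rᵐᵒᵖ (RtIdeal R e)).subtype
            (m : Submodule Rᵐᵒᵖ _)).comap (RtIdeal R e).subtype := by
        apply Submodule.map_injective_of_injective (Submodule.injective_subtype (RtIdeal R e))
        rw [Submodule.map_iSup, Submodule.map_comap_subtype, inf_eq_right.2 hBer]
        have hstep : ∀ m : ↥𝒯, Submodule.map (RtIdeal R e).subtype
            ((Submodule.map (SocleIn Rᵐᵒᵖ (RtIdeal R e)).subtype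
              (m : Submodule Rᵐᵒᵖ _)).comap (RtIdeal R e).subtype)
            = Submodule.map (SocleIn Rᵐᵒᵖ (RtIdeal R e)).subtype (m : Submodule Rᵐᵒᵖ _) := by
          intro m
          rw [Submodule.map_comap_subtype, inf_eq_right.2 ((hGle m).trans hBer)]
        rw [iSup_congr hstep, ← Submodule.map_iSup, ← sSup_eq_iSup', hBc,
          Submodule.map_comap_subtype, inf_eq_right.2 hBle]
      rw [hBeq, Submodule.map_iSup]
      refine iSup_le ?_
      intro mt
      obtain ⟨hm1, hm2⟩ := mt.2
      refine Stmt8Aux.simple_image_le (Asub := A) (B := B)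
        (Soc := SocleIn Rᵐᵒᵖ (RtIdeal R e)) (eR := RtIdeal R e)
        (S' := Submodule.map (SocleIn Rᵐᵒᵖ (RtIdeal R e)).subtype mt.1)
        hABdisj hsup hSocle (fun V hV hVs => le_sSup ⟨hV, hVs⟩)
        (fun S T hS hT h1 h2 isoST => (horth S T hS hT h1 h2) ⟨isoST⟩)
        Φ hΦmem (hGle mt) ?_
      haveI : IsSimpleModule Rᵐᵒᵖ ↥(mt.1) := hm1
      have heq : ↥(Submodule.map (SocleIn Rᵐᵒᵖ (RtIdeal R e)).subtype mt.1)
          ≃ₗ[Rᵐᵒᵖ] ↥(mt.1) :=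
        (Submodule.equivMapOfInjective (SocleIn Rᵐᵒᵖ (RtIdeal R e)).subtype
          (Submodule.injective_subtype _) mt.1).symm
      exact IsSimpleModule.congr (R := Rᵐᵒᵖ) (N := ↥(mt.1)) heq
    exact hkey ⟨x, hx, rfl⟩
  -- conclusion
  refine ⟨B, disjoint_iff.2 hABdisj, hsup, horth, ?_⟩
  intro N f
  haveI hproj : Module.Projective Rᵐᵒᵖ ↥(RtIdeal R e) := Stmt8Aux.projective_rtIdeal e he
  have hsurj : Function.Surjective (N.mkQ.comp (B.comap (RtIdeal R e).subtype).mkQ) := by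
    rw [LinearMap.coe_comp]
    exact (Submodule.mkQ_surjective N).comp (Submodule.mkQ_surjective _)
  obtain ⟨h', hh'⟩ := Module.projective_lifting_property
    (N.mkQ.comp (B.comap (RtIdeal R e).subtype).mkQ)
    (f.comp (B.comap (RtIdeal R e).subtype).mkQ) hsurj
  have hker : B.comap (RtIdeal R e).subtype ≤
      LinearMap.ker ((B.comap (RtIdeal R e).subtype).mkQ.comp h') := by
    intro x hx
    rw [LinearMap.mem_ker, LinearMap.comp_apply, Submodule.mkQ_apply,
      Submodule.Quotient.mk_eq_zero]
    exact hFI h' x hx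
  refine ⟨(B.comap (RtIdeal R e).subtype).liftQ
    ((B.comap (RtIdeal R e).subtype).mkQ.comp h') hker, ?_⟩
  refine Submodule.linearMap_qext _ (LinearMap.ext fun x => ?_)
  have h1 : (B.comap (RtIdeal R e).subtype).liftQ
      ((B.comap (RtIdeal R e).subtype).mkQ.comp h') hker
      ((B.comap (RtIdeal R e).subtype).mkQ x)
      = (B.comap (RtIdeal R e).subtype).mkQ (h' x) := rfl
  have h2 := LinearMap.congr_fun hh' x
  simp only [LinearMap.comp_apply] at h2 ⊢
  rw [h1]
  exact h2
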